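/- The number of linear extensions of the partial order ≺_T induced by a spanning tree T of the complete graph on {0,...,n} rooted at 0 equals the number of permutations s of {1,...,n} such that the path tree T_s is compatible with T, i.e., ∑_{s ∈ S_n} C(T, T_s) equals the number of linear extensions of ≺_T; in particular, when T is the star with edges {0,i} for all i ∈ {1,...,n}, every permutation s satisfies C(T, T_s) = 1, so the sum is n!. -/

import Mathlib

/-- The relation induced on `{0,…,n}` by a spanning tree `T` rooted at `0`:
`i ≺_T j` iff `i ≠ j` and `i` lies on the (unique) path in `T` from `0` to `j`. -/
def treeOrder {n : ℕ} (T : SimpleGraph (Fin (n + 1))) :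
    Fin (n + 1) → Fin (n + 1) → Prop :=
  fun i j => i ≠ j ∧ ∀ p : T.Walk 0 j, p.IsPath → i ∈ p.support

/-- The total order `0 < s(1) < ⋯ < s(n)` induced by the path tree `T_s`, with `s`
(extended by `s(0) = 0`) encoded as `g : Fin (n+1) ≃ Fin (n+1)`, `g 0 = 0`. -/
def pathOrder {n : ℕ} (g : Equiv.Perm (Fin (n + 1))) :
    Fin (n + 1) → Fin (n + 1) → Prop :=
  fun a b => g.symm a < g.symm b

/-- `T` and `T_s` are compatible, `C(T, T_s) = 1`: the orders `≺_T` and `≺_{T_s}`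
admit a common linear extension. -/
def Compatible {n : ℕ} (T : SimpleGraph (Fin (n + 1)))
    (g : Equiv.Perm (Fin (n + 1))) : Prop :=
  ∃ L : Fin (n + 1) → Fin (n + 1) → Prop, IsStrictTotalOrder (Fin (n + 1)) L ∧
    (∀ a b, treeOrder T a b → L a b) ∧ ∀ a b, pathOrder g a b → L a b

lemma pathOrder_sto {n : ℕ} (g : Equiv.Perm (Fin (n + 1))) :
    IsStrictTotalOrder (Fin (n + 1)) (pathOrder g) := by
  refine { trichotomous := ?_, irrefl := ?_, trans := ?_ }
  · intro a b
    rcases lt_trichotomy (g.symm a) (g.symm b) with h|h|h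
    · exact fun h1 _ => absurd h h1
    · exact fun _ _ => g.symm.injective h
    · exact fun _ h2 => absurd h h2
  · intro a; exact lt_irrefl _
  · intro a b c h1 h2; exact lt_trans h1 h2

lemma treeOrder_zero {n : ℕ} (T : SimpleGraph (Fin (n + 1))) {b : Fin (n + 1)}
    (hb : b ≠ 0) : treeOrder T 0 b :=
  ⟨Ne.symm hb, fun p _ => p.start_mem_support⟩

lemma compat_iff {n : ℕ} (T : SimpleGraph (Fin (n + 1))) (g : Equiv.Perm (Fin (n + 1))) :
    (g 0 = 0 ∧ Compatible T g) ↔ ∀ a b, treeOrder T a b → g.symm a < g.symm b := by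
  constructor
  · rintro ⟨h0, L, hL, hTL, hPL⟩ a b hab
    haveI := hL
    have hne : g.symm a ≠ g.symm b := fun h => hab.1 (g.symm.injective h)
    rcases hne.lt_or_gt with h | h
    · exact h
    · exact absurd (trans_of L (hTL a b hab) (hPL b a h)) (irrefl_of L a)
  · intro hext
    have h0 : g 0 = 0 := by
      by_contra h0
      have := hext 0 (g 0) (treeOrder_zero T h0)
      simp at this
    exact ⟨h0, pathOrder g, pathOrder_sto g, hext, fun a b h => h⟩

def fixZeroEquiv (n : ℕ) :
    {x : Fin (n + 1) × Equiv.Perm (Fin n) // x.1 = 0} ≃ Equiv.Perm (Fin n) where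
  toFun x := x.1.2
  invFun e := ⟨(0, e), rfl⟩
  left_inv := by rintro ⟨⟨a, b⟩, h⟩; simp only at h; subst h; rfl
  right_inv e := rfl

lemma card_fix (n : ℕ) :
    Nat.card {g : Equiv.Perm (Fin (n + 1)) // g 0 = 0} = n.factorial := by
  have e : {g : Equiv.Perm (Fin (n + 1)) // g 0 = 0} ≃ Equiv.Perm (Fin n) := by
    refine (Equiv.Perm.decomposeFin.subtypeEquiv
      (q := fun x => x.1 = 0) fun g => ?_).trans (fixZeroEquiv n)
    conv_lhs => rw [← Equiv.Perm.decomposeFin.symm_apply_apply g]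
    obtain ⟨p, e⟩ := Equiv.Perm.decomposeFin g
    simp
  rw [Nat.card_congr e, Nat.card_eq_fintype_card, Fintype.card_perm, Fintype.card_fin]

lemma star_treeOrder {n : ℕ} {T : SimpleGraph (Fin (n + 1))}
    (h : ∀ a b : Fin (n + 1), T.Adj a b ↔ (a = 0 ∧ b ≠ 0) ∨ (b = 0 ∧ a ≠ 0))
    {a b : Fin (n + 1)} (hab : treeOrder T a b) : a = 0 ∧ b ≠ 0 := by
  obtain ⟨hne, hp⟩ := hab
  by_cases hb : b = 0
  · subst hb
    have := hp SimpleGraph.Walk.nil SimpleGraph.Walk.IsPath.nil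
    simp at this
    exact absurd this hne
  · have adj : T.Adj 0 b := (h 0 b).2 (Or.inl ⟨rfl, hb⟩)
    have hpath : (SimpleGraph.Walk.cons adj SimpleGraph.Walk.nil).IsPath := by
      refine SimpleGraph.Walk.IsPath.nil.cons ?_
      simp [Ne.symm hb]
    have := hp _ hpath
    simp at this
    rcases this with h0 | hb'
    · exact ⟨h0, hb⟩
    · exact absurd hb' hne

/-- For a spanning tree `T` of the complete graph on `{0,…,n}` rooted at `0`, the
number of permutations `s` of `{1,…,n}` whose path tree `T_s` is compatible with
`T` (i.e. `∑_{s ∈ S_n} C(T, T_s)`) equals the number of linear extensions of the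
tree order `≺_T`.  In particular, if `T` is the star with edges `{0,i}`,
`i ∈ {1,…,n}`, then every `s` satisfies `C(T, T_s) = 1` and the count is `n!`. -/
theorem stmt_19 (n : ℕ) (T : SimpleGraph (Fin (n + 1))) (hT : T.IsTree) :
    Nat.card {g : Equiv.Perm (Fin (n + 1)) // g 0 = 0 ∧ Compatible T g} =
      Nat.card {g : Equiv.Perm (Fin (n + 1)) //
        ∀ a b, treeOrder T a b → g.symm a < g.symm b} ∧
    ((∀ a b : Fin (n + 1), T.Adj a b ↔ (a = 0 ∧ b ≠ 0) ∨ (b = 0 ∧ a ≠ 0)) →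
      (∀ g : Equiv.Perm (Fin (n + 1)), g 0 = 0 → Compatible T g) ∧
      Nat.card {g : Equiv.Perm (Fin (n + 1)) // g 0 = 0 ∧ Compatible T g} =
        Nat.factorial n) := by
  constructor
  · exact Nat.card_congr (Equiv.subtypeEquivRight fun g => compat_iff T g)
  · intro h
    have hcomp : ∀ g : Equiv.Perm (Fin (n + 1)), g 0 = 0 → Compatible T g := by
      intro g hg
      refine ⟨pathOrder g, pathOrder_sto g, ?_, fun a b hab => hab⟩
      intro a b hab
      obtain ⟨ha, hb⟩ := star_treeOrder h hab
      subst ha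
      have h0 : g.symm 0 = 0 := by
        rw [Equiv.symm_apply_eq, hg]
      have hbne : g.symm b ≠ 0 := by
        intro hc
        apply hb
        rw [← hg, ← hc, Equiv.apply_symm_apply]
      show g.symm 0 < g.symm b
      rw [h0]
      exact Fin.pos_of_ne_zero hbne
    refine ⟨hcomp, ?_⟩
    rw [Nat.card_congr (Equiv.subtypeEquivRight fun g =>
      ⟨fun x => x.1, fun h0 => ⟨h0, hcomp g h0⟩⟩)]
    exact card_fix n
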